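/- Let G be a connected interval graph without an apex, let M be a possible end of G, and let 𝒞 be a maximal set of pairwise ≺_M-incomparable max cliques of G (no two distinct members of 𝒞 are related by ≺_M, and 𝒞 is inclusion-maximal with this property). Then: (1) B ∩ C = B ∩ C' for all C,C' ∈ 𝒞 and all B ∈ M_G∖𝒞; (2) S_𝒞 := ⋃_{C ∈ 𝒞} C ∖ ⋃_{B ∈ M_G∖𝒞} B is a module of G; and (3) S_𝒞 = {v ∈ ⋃𝒞 : span(v) ≤ |𝒞|}. -/

import Mathlib

/-- `lo, hi` is an interval representation of the (finite simple) graph `G`: each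
vertex `v` is assigned the closed interval `[lo v, hi v] ⊆ ℕ`, and distinct vertices
are adjacent iff their intervals intersect. -/
def IsIntervalRep {V : Type} (G : SimpleGraph V) (lo hi : V → ℕ) : Prop :=
  (∀ v : V, lo v ≤ hi v) ∧
  ∀ u v : V, u ≠ v →
    (G.Adj u v ↔ (Set.Icc (lo u) (hi u) ∩ Set.Icc (lo v) (hi v)).Nonempty)

/-- A graph is an interval graph if it has an interval representation. -/
def IsIntervalGraph {V : Type} (G : SimpleGraph V) : Prop :=
  ∃ lo hi : V → ℕ, IsIntervalRep G lo hi

/-- A max clique: an inclusion-maximal clique. -/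
def IsMaxClique {V : Type} (G : SimpleGraph V) (s : Set V) : Prop :=
  G.IsClique s ∧ ∀ t : Set V, G.IsClique t → s ⊆ t → t = s

/-- An apex of a graph: a vertex adjacent to all other vertices. -/
def HasApex {V : Type} (G : SimpleGraph V) : Prop :=
  ∃ v : V, ∀ u : V, u ≠ v → G.Adj v u

/-- `≺_M`: the smallest binary relation on the max cliques of `G` such that
(i) `M ≺_M C` for every max clique `C ≠ M`;
(ii) `C ≺_M D` whenever `C` is a max clique and there is `E` with `E ≺_M D` and
`(E ∩ C) ∖ D ≠ ∅`; and
(iii) `C ≺_M D` whenever `D` is a max clique and there is `E` with `C ≺_M E` and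
`(E ∩ D) ∖ C ≠ ∅`. -/
inductive PrecM {V : Type} (G : SimpleGraph V) (M : Set V) : Set V → Set V → Prop
  | init (C : Set V) : IsMaxClique G C → C ≠ M → PrecM G M M C
  | ext_left (C D E : Set V) : IsMaxClique G C → PrecM G M E D →
      ((E ∩ C) \ D).Nonempty → PrecM G M C D
  | ext_right (C D E : Set V) : IsMaxClique G D → PrecM G M C E →
      ((E ∩ D) \ C).Nonempty → PrecM G M C D

/-- A minimal interval representation: one for which the number of points of
`⋃_v I_v ⊆ ℕ` is minimum among all interval representations of `G`. -/
def IsMinimalRep {V : Type} (G : SimpleGraph V) (lo hi : V → ℕ) : Prop :=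
  IsIntervalRep G lo hi ∧
  ∀ lo' hi' : V → ℕ, IsIntervalRep G lo' hi' →
    (⋃ v : V, Set.Icc (lo v) (hi v)).ncard ≤ (⋃ v : V, Set.Icc (lo' v) (hi' v)).ncard

/-- `M` is a possible end of `G`: there is a minimal interval representation of `G`
under whose induced order on max cliques `M` is least, i.e. `M` is the max clique
consisting of the intervals containing the leftmost point `k` of the representation. -/
def PossibleEnd {V : Type} (G : SimpleGraph V) (M : Set V) : Prop :=
  ∃ lo hi : V → ℕ, IsMinimalRep G lo hi ∧
    ∃ k : ℕ, (∀ v : V, k ≤ lo v) ∧ M = {v : V | k ∈ Set.Icc (lo v) (hi v)}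

/-- A module of `G`: a set `W` of vertices such that every vertex outside `W` is
adjacent either to all vertices of `W` or to none of them. -/
def IsModule {V : Type} (G : SimpleGraph V) (W : Set V) : Prop :=
  ∀ v : V, v ∉ W → (∀ w ∈ W, G.Adj v w) ∨ (∀ w ∈ W, ¬ G.Adj v w)

/-- `span(v)`: the number of max cliques of `G` containing `v`. -/
noncomputable def span {V : Type} (G : SimpleGraph V) (v : V) : ℕ :=
  {C : Set V | IsMaxClique G C ∧ v ∈ C}.ncard

/-- Key trichotomy lemma, proved purely by induction on the derivation of `≺_M`:
if `A ≺_M C`, then every max clique `B ∉ {A, C}` is comparable with `A` or with `C`. -/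
lemma precM_trichotomy {V : Type} {G : SimpleGraph V} {M : Set V} :
    ∀ {A C : Set V}, PrecM G M A C → ∀ B : Set V, IsMaxClique G B → B ≠ A → B ≠ C →
      PrecM G M B A ∨ PrecM G M A B ∨ PrecM G M B C ∨ PrecM G M C B := by
  intro A C h
  induction h with
  | init C hC hne =>
    intro B hB hBA hBC
    exact Or.inr (Or.inl (PrecM.init B hB hBA))
  | ext_left C D E hC hED hne ih =>
    intro B hB hBC hBD
    by_cases hBE : B = E
    · subst hBE
      exact Or.inr (Or.inr (Or.inl hED))
    · obtain ⟨x, ⟨hxE, hxC⟩, hxD⟩ := hne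
      rcases ih B hB hBE hBD with hBE' | hEB' | hBD' | hDB'
      · by_cases hxB : x ∈ B
        · exact Or.inr (Or.inr (Or.inl (PrecM.ext_left B D E hB hED ⟨x, ⟨hxE, hxB⟩, hxD⟩)))
        · exact Or.inl (PrecM.ext_right B C E hC hBE' ⟨x, ⟨hxE, hxC⟩, hxB⟩)
      · by_cases hxB : x ∈ B
        · exact Or.inr (Or.inr (Or.inl (PrecM.ext_left B D E hB hED ⟨x, ⟨hxE, hxB⟩, hxD⟩)))
        · exact Or.inr (Or.inl (PrecM.ext_left C B E hC hEB' ⟨x, ⟨hxE, hxC⟩, hxB⟩))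
      · exact Or.inr (Or.inr (Or.inl hBD'))
      · exact Or.inr (Or.inr (Or.inr hDB'))
  | ext_right C D E hD hCE hne ih =>
    intro B hB hBC hBD
    by_cases hBE : B = E
    · subst hBE
      exact Or.inr (Or.inl hCE)
    · obtain ⟨x, ⟨hxE, hxD⟩, hxC⟩ := hne
      rcases ih B hB hBC hBE with hBC' | hCB' | hBE' | hEB'
      · exact Or.inl hBC'
      · exact Or.inr (Or.inl hCB')
      · by_cases hxB : x ∈ B
        · exact Or.inr (Or.inl (PrecM.ext_right C B E hB hCE ⟨x, ⟨hxE, hxB⟩, hxC⟩))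
        · exact Or.inr (Or.inr (Or.inl (PrecM.ext_right B D E hD hBE' ⟨x, ⟨hxE, hxD⟩, hxB⟩)))
      · by_cases hxB : x ∈ B
        · exact Or.inr (Or.inl (PrecM.ext_right C B E hB hCE ⟨x, ⟨hxE, hxB⟩, hxC⟩))
        · exact Or.inr (Or.inr (Or.inr (PrecM.ext_left D B E hD hEB' ⟨x, ⟨hxE, hxD⟩, hxB⟩)))

/-- Every clique of a finite graph extends to a max clique. -/
lemma exists_maxClique_superset {V : Type} [Fintype V] (G : SimpleGraph V)
    {s : Set V} (hs : G.IsClique s) : ∃ t : Set V, IsMaxClique G t ∧ s ⊆ t := by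
  classical
  have hfin : {t : Set V | G.IsClique t ∧ s ⊆ t}.Finite := Set.toFinite _
  have hne : {t : Set V | G.IsClique t ∧ s ⊆ t}.Nonempty := ⟨s, hs, subset_rfl⟩
  obtain ⟨t, ht, hmax⟩ := hfin.exists_maximal hne
  refine ⟨t, ⟨ht.1, ?_⟩, ht.2⟩
  intro u hu htu
  exact Set.Subset.antisymm (hmax ⟨hu, ht.2.trans htu⟩ htu) htu

/-- Let `G` be a connected interval graph without an apex, `M` a
possible end of `G`, and `𝒞` a maximal set of pairwise `≺_M`-incomparable max cliques.
Then (1) `B ∩ C = B ∩ C'` for all `C, C' ∈ 𝒞` and every max clique `B ∉ 𝒞`;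
(2) `S_𝒞 := ⋃𝒞 ∖ ⋃(M_G ∖ 𝒞)` is a module of `G`; and
(3) `S_𝒞 = {v ∈ ⋃𝒞 : span(v) ≤ |𝒞|}`. -/
theorem incomparability_class_module {V : Type} [Fintype V] (G : SimpleGraph V)
    (hG : IsIntervalGraph G) (hconn : G.Connected) (hapex : ¬ HasApex G)
    (M : Set V) (hM : IsMaxClique G M) (hend : PossibleEnd G M)
    (𝒞 : Set (Set V)) (h𝒞 : ∀ C ∈ 𝒞, IsMaxClique G C)
    (hpair : ∀ C ∈ 𝒞, ∀ D ∈ 𝒞, C ≠ D → ¬ PrecM G M C D)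
    (hmax : ∀ 𝒟 : Set (Set V), (∀ C ∈ 𝒟, IsMaxClique G C) →
      (∀ C ∈ 𝒟, ∀ D ∈ 𝒟, C ≠ D → ¬ PrecM G M C D) → 𝒞 ⊆ 𝒟 → 𝒟 = 𝒞) :
    (∀ C ∈ 𝒞, ∀ C' ∈ 𝒞, ∀ B : Set V, IsMaxClique G B → B ∉ 𝒞 →
      B ∩ C = B ∩ C') ∧
    IsModule G (⋃₀ 𝒞 \ ⋃₀ {B : Set V | IsMaxClique G B ∧ B ∉ 𝒞}) ∧
    ⋃₀ 𝒞 \ ⋃₀ {B : Set V | IsMaxClique G B ∧ B ∉ 𝒞}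
      = {v ∈ ⋃₀ 𝒞 | span G v ≤ 𝒞.ncard} := by
  classical
  -- Every max clique outside 𝒞 is comparable with every member of 𝒞.
  have comp_all : ∀ B : Set V, IsMaxClique G B → B ∉ 𝒞 → ∀ C' ∈ 𝒞,
      PrecM G M B C' ∨ PrecM G M C' B := by
    intro B hB hBn C' hC'
    by_contra hcon
    push_neg at hcon
    obtain ⟨h1, h2⟩ := hcon
    have hinc : ∀ C ∈ 𝒞, ¬ PrecM G M B C ∧ ¬ PrecM G M C B := by
      intro C hC
      by_cases hCC' : C = C'
      · subst hCC'; exact ⟨h1, h2⟩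
      have hC'B : C' ≠ B := fun h => hBn (h ▸ hC')
      have hC'C : C' ≠ C := fun h => hCC' h.symm
      constructor
      · intro hBC
        rcases precM_trichotomy hBC C' (h𝒞 C' hC') hC'B hC'C with h' | h' | h' | h'
        · exact h2 h'
        · exact h1 h'
        · exact hpair C' hC' C hC hC'C h'
        · exact hpair C hC C' hC' hCC' h'
      · intro hCB
        rcases precM_trichotomy hCB C' (h𝒞 C' hC') hC'C hC'B with h' | h' | h' | h'
        · exact hpair C' hC' C hC hC'C h'
        · exact hpair C hC C' hC' hCC' h'
        · exact h2 h'
        · exact h1 h'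
    have heq : insert B 𝒞 = 𝒞 := by
      apply hmax
      · intro C hC
        rcases Set.mem_insert_iff.1 hC with rfl | hC
        · exact hB
        · exact h𝒞 C hC
      · intro X hX Y hY hXY hprec
        rcases Set.mem_insert_iff.1 hX with hXB | hX' <;>
          rcases Set.mem_insert_iff.1 hY with hYB | hY'
        · exact hXY (hXB.trans hYB.symm)
        · rw [hXB] at hprec
          exact (hinc Y hY').1 hprec
        · rw [hYB] at hprec
          exact (hinc X hX').2 hprec
        · exact hpair X hX' Y hY' hXY hprec
      · exact Set.subset_insert _ _
    exact hBn (heq ▸ Set.mem_insert B 𝒞)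
  -- Claim 1 (one inclusion).
  have claim1s : ∀ C ∈ 𝒞, ∀ C' ∈ 𝒞, ∀ B : Set V, IsMaxClique G B → B ∉ 𝒞 →
      B ∩ C ⊆ C' := by
    intro C hC C' hC' B hB hBn x hx
    by_contra hxC'
    have hCC' : C ≠ C' := fun h => hxC' (h ▸ hx.2)
    rcases comp_all B hB hBn C' hC' with hBC' | hC'B
    · exact hpair C hC C' hC' hCC'
        (PrecM.ext_left C C' B (h𝒞 C hC) hBC' ⟨x, ⟨hx.1, hx.2⟩, hxC'⟩)
    · exact hpair C' hC' C hC (Ne.symm hCC')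
        (PrecM.ext_right C' C B (h𝒞 C hC) hC'B ⟨x, ⟨hx.1, hx.2⟩, hxC'⟩)
  have claim1 : ∀ C ∈ 𝒞, ∀ C' ∈ 𝒞, ∀ B : Set V, IsMaxClique G B → B ∉ 𝒞 →
      B ∩ C = B ∩ C' := by
    intro C hC C' hC' B hB hBn
    apply Set.Subset.antisymm
    · exact fun x hx => ⟨hx.1, claim1s C hC C' hC' B hB hBn hx⟩
    · exact fun x hx => ⟨hx.1, claim1s C' hC' C hC B hB hBn hx⟩
  -- If `v` lies both in some clique of 𝒞 and in some max clique outside 𝒞,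
  -- then `v` lies in every clique of 𝒞.
  have hvall : ∀ v : V, (∃ C ∈ 𝒞, v ∈ C) →
      (∃ B : Set V, IsMaxClique G B ∧ B ∉ 𝒞 ∧ v ∈ B) → ∀ C' ∈ 𝒞, v ∈ C' := by
    intro v hC hB C' hC'
    obtain ⟨C, hCmem, hvC⟩ := hC
    obtain ⟨B, hBmax, hBn, hvB⟩ := hB
    have hm : v ∈ B ∩ C' := by
      rw [← claim1 C hCmem C' hC' B hBmax hBn]; exact ⟨hvB, hvC⟩
    exact hm.2
  refine ⟨claim1, ?_, ?_⟩
  · -- Claim 2: the set is a module.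
    intro v hv
    by_cases hex : ∃ w ∈ ⋃₀ 𝒞 \ ⋃₀ {B : Set V | IsMaxClique G B ∧ B ∉ 𝒞}, G.Adj v w
    · left
      obtain ⟨w, hw, hadj⟩ := hex
      have hvw : v ≠ w := hadj.ne
      have hcl : G.IsClique {v, w} := by
        intro a ha b hb hab
        simp only [Set.mem_insert_iff, Set.mem_singleton_iff] at ha hb
        rcases ha with rfl | rfl <;> rcases hb with rfl | rfl
        · exact absurd rfl hab
        · exact hadj
        · exact hadj.symm
        · exact absurd rfl hab
      obtain ⟨D, hD, hsub⟩ := exists_maxClique_superset G hcl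
      have hvD : v ∈ D := hsub (by simp)
      have hwD : w ∈ D := hsub (by simp)
      have hD𝒞 : D ∈ 𝒞 := by
        by_contra hDn
        exact hw.2 ⟨D, ⟨hD, hDn⟩, hwD⟩
      have hvOut : v ∈ ⋃₀ {B : Set V | IsMaxClique G B ∧ B ∉ 𝒞} := by
        by_contra h
        exact hv ⟨⟨D, hD𝒞, hvD⟩, h⟩
      obtain ⟨B, hB, hvB⟩ := hvOut
      intro w' hw'
      obtain ⟨C', hC', hw'C'⟩ := hw'.1
      have hvC' : v ∈ C' := hvall v ⟨D, hD𝒞, hvD⟩ ⟨B, hB.1, hB.2, hvB⟩ C' hC'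
      have hne : v ≠ w' := by
        intro h
        exact hw'.2 ⟨B, hB, h ▸ hvB⟩
      exact (h𝒞 C' hC').1 hvC' hw'C' hne
    · right
      intro w hw hadj
      exact hex ⟨w, hw, hadj⟩
  · -- Claim 3: description via `span`.
    ext v
    constructor
    · rintro ⟨⟨C, hC, hvC⟩, hnot⟩
      refine ⟨⟨C, hC, hvC⟩, ?_⟩
      have hsub : {D : Set V | IsMaxClique G D ∧ v ∈ D} ⊆ 𝒞 := by
        intro D hD
        by_contra hDn
        exact hnot ⟨D, ⟨hD.1, hDn⟩, hD.2⟩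
      exact Set.ncard_le_ncard hsub (Set.toFinite 𝒞)
    · rintro ⟨⟨C, hC, hvC⟩, hspan⟩
      refine ⟨⟨C, hC, hvC⟩, ?_⟩
      intro hvOut
      obtain ⟨B, hB, hvB⟩ := hvOut
      have hsub : insert B 𝒞 ⊆ {D : Set V | IsMaxClique G D ∧ v ∈ D} := by
        intro D hD
        rcases Set.mem_insert_iff.1 hD with rfl | hD𝒞
        · exact ⟨hB.1, hvB⟩
        · exact ⟨h𝒞 D hD𝒞, hvall v ⟨C, hC, hvC⟩ ⟨B, hB.1, hB.2, hvB⟩ D hD𝒞⟩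
      have h1 : (insert B 𝒞).ncard ≤ span G v :=
        Set.ncard_le_ncard hsub (Set.toFinite _)
      have h2 : (insert B 𝒞).ncard = 𝒞.ncard + 1 :=
        Set.ncard_insert_of_notMem hB.2 (Set.toFinite _)
      have h3 : span G v ≤ 𝒞.ncard := hspan
      omega
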